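/- The inverse integer optimization problem (IIOP) is in coNP: if there are no λ ∈ ℝ^n_{≥0}, not all zero, making x* a minimizer of ∑_j λ_j f_j(x_j) over P ∩ ℤ^n, then there is a subset H' of at most n+1 Graver moves g ∈ G(D) with x* + g ∈ P, and rationals v_g ≥ 0 for g ∈ H', such that ∑_{g∈H'} v_g [f_j(x*_j + g_j) − f_j(x*_j)] < 0 for every j = 1,…,n; conversely any such v certifies infeasibility. -/

import Mathlib

/-- `z` is a Graver basis element of `D`: a nonzero integer kernel element of `D` that is
not the sum of two nonzero sign-compatible integer kernel elements. -/
def InGraver {κ ι : Type*} [Fintype κ] [Fintype ι] (D : Matrix κ ι ℤ) (z : ι → ℤ) : Prop :=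
  z ≠ 0 ∧ D.mulVec z = 0 ∧
    ¬ ∃ u v : ι → ℤ, u ≠ 0 ∧ v ≠ 0 ∧ D.mulVec u = 0 ∧ D.mulVec v = 0 ∧
      (∀ j, 0 ≤ u j * v j) ∧ z = u + v

/-- Feasibility for `P = {x : Dx = d, 0 ≤ x ≤ u}` (integer points). -/
def Feas {dd n : ℕ} (D : Matrix (Fin dd) (Fin n) ℤ) (dv : Fin dd → ℤ)
    (u : Fin n → ℤ) (x : Fin n → ℤ) : Prop :=
  D.mulVec x = dv ∧ ∀ j, 0 ≤ x j ∧ x j ≤ u j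

lemma sign_cases_int (g z : ℤ) (h1 : 0 ≤ g * z) (h2 : g.natAbs ≤ z.natAbs) :
    (0 ≤ z → 0 ≤ g ∧ g ≤ z) ∧ (z ≤ 0 → z ≤ g ∧ g ≤ 0) := by
  rcases mul_nonneg_iff.mp h1 with ⟨hg, hz⟩ | ⟨hg, hz⟩ <;> constructor <;> intro h <;> omega

lemma abs_add_of_mul_nonneg (a b : ℤ) (h : 0 ≤ a * b) :
    (a + b).natAbs = a.natAbs + b.natAbs := by
  rcases mul_nonneg_iff.mp h with ⟨ha, hb⟩ | ⟨ha, hb⟩ <;> omega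

lemma convex_superadd (f : ℝ → ℝ) (hf : ConvexOn ℝ Set.univ f) (a t s : ℝ) (h : 0 ≤ t * s) :
    f (a + t) + f (a + s) ≤ f (a + (t + s)) + f a := by
  rcases eq_or_ne (t + s) 0 with h0 | h0
  · rcases mul_nonneg_iff.mp h with ⟨ht, hs⟩ | ⟨ht, hs⟩ <;>
    · have : t = 0 := by linarith
      have : s = 0 := by linarith
      simp_all
  · have hmul : t / (t + s) * (t + s) = t := div_mul_cancel₀ t h0
    have hmul2 : (1 - t / (t + s)) * (t + s) = s := by
      rw [sub_mul, hmul, one_mul]; ring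
    set θ : ℝ := t / (t + s) with hθ
    have hθ0 : 0 ≤ θ ∧ 0 ≤ 1 - θ := by
      have h1θ : 1 - θ = s / (t + s) := by
        rw [eq_div_iff h0, hmul2]
      rcases mul_nonneg_iff.mp h with ⟨ht, hs⟩ | ⟨ht, hs⟩
      · have hts : 0 < t + s := lt_of_le_of_ne (by linarith) (Ne.symm h0)
        constructor <;> [skip; rw [h1θ]] <;> positivity
      · have hts : t + s < 0 := lt_of_le_of_ne (by linarith) h0
        have r1 : θ = (-t) / (-(t + s)) := by rw [hθ, neg_div_neg_eq]
        have r2 : s / (t + s) = (-s) / (-(t + s)) := (neg_div_neg_eq s (t+s)).symm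
        constructor
        · rw [r1]; exact div_nonneg (by linarith) (by linarith)
        · rw [h1θ, r2]; exact div_nonneg (by linarith) (by linarith)
    have e1 : a + t = (1 - θ) • a + θ • (a + (t + s)) := by
      simp only [smul_eq_mul]; linear_combination -hmul
    have e2 : a + s = θ • a + (1 - θ) • (a + (t + s)) := by
      simp only [smul_eq_mul]; linear_combination -hmul2
    have c1 := hf.2 (Set.mem_univ a) (Set.mem_univ (a + (t + s))) hθ0.2 hθ0.1 (by ring)
    have c2 := hf.2 (Set.mem_univ a) (Set.mem_univ (a + (t + s))) hθ0.1 hθ0.2 (by ring)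
    rw [← e1] at c1
    rw [← e2] at c2
    simp only [smul_eq_mul] at c1 c2
    nlinarith [c1, c2]

lemma list_sum_nonpos : ∀ L : List ℝ, (∀ t ∈ L, t ≤ 0) → L.sum ≤ 0
  | [], _ => by simp
  | t :: L, h => by
    simp only [List.sum_cons]
    have := list_sum_nonpos L fun s hs => h s (List.mem_cons_of_mem _ hs)
    have := h t (List.mem_cons_self)
    linarith

lemma convex_superadd_list (f : ℝ → ℝ) (hf : ConvexOn ℝ Set.univ f) (a : ℝ) :
    ∀ L : List ℝ, ((∀ t ∈ L, 0 ≤ t) ∨ (∀ t ∈ L, t ≤ 0)) →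
      ((L.map (fun t => f (a + t) - f a)).sum ≤ f (a + L.sum) - f a) := by
  intro L
  induction L with
  | nil => simp
  | cons t L ih =>
    intro hsign
    have hsign' : (∀ s ∈ L, (0:ℝ) ≤ s) ∨ (∀ s ∈ L, s ≤ (0:ℝ)) := by
      rcases hsign with h | h
      · exact Or.inl fun s hs => h s (List.mem_cons_of_mem _ hs)
      · exact Or.inr fun s hs => h s (List.mem_cons_of_mem _ hs)
    have ihL := ih hsign'
    have hts : 0 ≤ t * L.sum := by
      rcases hsign with h | h
      · exact mul_nonneg (h t (List.mem_cons_self))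
          (List.sum_nonneg fun s hs => h s (List.mem_cons_of_mem _ hs))
      · exact mul_nonneg_iff.mpr (Or.inr ⟨h t (List.mem_cons_self),
          list_sum_nonpos L fun s hs => h s (List.mem_cons_of_mem _ hs)⟩)
    have key := convex_superadd f hf a t L.sum hts
    simp only [List.map_cons, List.sum_cons]
    linarith


lemma graver_decomp {dd n : ℕ} (D : Matrix (Fin dd) (Fin n) ℤ) :
    ∀ N : ℕ, ∀ z : Fin n → ℤ, (∑ j, (z j).natAbs) ≤ N → z ≠ 0 → D.mulVec z = 0 →
    ∃ L : List (Fin n → ℤ), L.sum = z ∧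
      ∀ g ∈ L, InGraver D g ∧ ∀ j, 0 ≤ g j * z j ∧ (g j).natAbs ≤ (z j).natAbs := by
  intro N
  induction N with
  | zero =>
    intro z hN hz _
    exfalso
    apply hz
    funext j
    have := Finset.sum_eq_zero_iff.mp (Nat.le_zero.mp hN) j (Finset.mem_univ j)
    show z j = 0
    omega
  | succ N ih =>
    intro z hN hz hker
    by_cases hG : InGraver D z
    · refine ⟨[z], by simp, ?_⟩
      rintro g hg
      simp only [List.mem_singleton] at hg
      subst hg
      exact ⟨hG, fun j => ⟨mul_self_nonneg _, le_rfl⟩⟩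
    · have hsplit : ∃ p q : Fin n → ℤ, p ≠ 0 ∧ q ≠ 0 ∧ D.mulVec p = 0 ∧ D.mulVec q = 0 ∧
          (∀ j, 0 ≤ p j * q j) ∧ z = p + q := by
        by_contra hc
        exact hG ⟨hz, hker, hc⟩
      obtain ⟨p, q, hp0, hq0, hpk, hqk, hpq, hzpq⟩ := hsplit
      have habs : ∀ j, (z j).natAbs = (p j).natAbs + (q j).natAbs := by
        intro j
        rw [hzpq]
        exact abs_add_of_mul_nonneg _ _ (hpq j)
      -- strict decrease for p
      have hple : ∑ j, (p j).natAbs ≤ N := by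
        obtain ⟨j0, hj0⟩ : ∃ j, q j ≠ 0 := by
          by_contra hcon
          push_neg at hcon
          exact hq0 (funext hcon)
        have hlt : ∑ j, (p j).natAbs < ∑ j, (z j).natAbs := by
          apply Finset.sum_lt_sum (fun j _ => by have := habs j; omega)
          exact ⟨j0, Finset.mem_univ j0, by have := habs j0; omega⟩
        omega
      have hqle : ∑ j, (q j).natAbs ≤ N := by
        obtain ⟨j0, hj0⟩ : ∃ j, p j ≠ 0 := by
          by_contra hcon
          push_neg at hcon
          exact hp0 (funext hcon)
        have hlt : ∑ j, (q j).natAbs < ∑ j, (z j).natAbs := by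
          apply Finset.sum_lt_sum (fun j _ => by have := habs j; omega)
          exact ⟨j0, Finset.mem_univ j0, by have := habs j0; omega⟩
        omega
      obtain ⟨Lp, hLpsum, hLp⟩ := ih p hple hp0 hpk
      obtain ⟨Lq, hLqsum, hLq⟩ := ih q hqle hq0 hqk
      refine ⟨Lp ++ Lq, by rw [List.sum_append, hLpsum, hLqsum, hzpq], ?_⟩
      intro g hg
      have key : ∀ (r w : Fin n → ℤ), (∀ j, 0 ≤ r j * w j) → z = r + w →
          (∀ j, 0 ≤ g j * r j ∧ (g j).natAbs ≤ (r j).natAbs) →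
          InGraver D g → InGraver D g ∧ ∀ j, 0 ≤ g j * z j ∧ (g j).natAbs ≤ (z j).natAbs := by
        intro r w hrw hzrw hconf hgG
        refine ⟨hgG, fun j => ?_⟩
        have h1 := (hconf j).1
        have h2 := (hconf j).2
        have h3 := hrw j
        have habsj : (z j).natAbs = (r j).natAbs + (w j).natAbs := by
          rw [hzrw]; exact abs_add_of_mul_nonneg _ _ (hrw j)
        have hzj : z j = r j + w j := by rw [hzrw]; rfl
        rcases mul_nonneg_iff.mp h1 with ⟨hgj, hrj⟩ | ⟨hgj, hrj⟩ <;>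
          rcases mul_nonneg_iff.mp h3 with ⟨hrj', hwj⟩ | ⟨hrj', hwj⟩ <;>
          constructor <;>
          first
            | omega
            | (apply mul_nonneg <;> omega)
            | (apply mul_nonneg_iff.mpr; constructor <;> omega)
            | (apply mul_nonneg_iff.mpr; refine Or.inr ⟨by omega, by omega⟩)
      rcases List.mem_append.mp hg with hgp | hgq
      · exact key p q hpq hzpq (fun j => (hLp g hgp).2 j) (hLp g hgp).1
      · exact key q p (fun j => by have := hpq j; linarith [mul_comm (p j) (q j)])
          (by rw [hzpq]; funext j; simp [add_comm]) (fun j => (hLq g hgq).2 j) (hLq g hgq).1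


lemma list_apply_sum {n : ℕ} (j : Fin n) :
    ∀ L : List (Fin n → ℤ), (L.map (fun g => ((g j : ℤ) : ℝ))).sum = ((L.sum j : ℤ) : ℝ)
  | [] => by simp
  | g :: L => by
    simp only [List.map_cons, List.sum_cons, Pi.add_apply, list_apply_sum j L]
    push_cast
    ring

lemma swap_list_sum {n : ℕ} (lam : Fin n → ℝ) (Φ : (Fin n → ℤ) → Fin n → ℝ) :
    ∀ L : List (Fin n → ℤ),
      ∑ j, lam j * (L.map (fun g => Φ g j)).sum = (L.map (fun g => ∑ j, lam j * Φ g j)).sum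
  | [] => by simp
  | g :: L => by
    simp only [List.map_cons, List.sum_cons, mul_add, Finset.sum_add_distrib,
      swap_list_sum lam Φ L]

lemma testset_opt {dd n : ℕ} (D : Matrix (Fin dd) (Fin n) ℤ) (dv : Fin dd → ℤ) (u : Fin n → ℤ)
    (f : Fin n → ℝ → ℝ) (hconv : ∀ j, ConvexOn ℝ Set.univ (f j))
    (xs : Fin n → ℤ) (hxs : Feas D dv u xs) (lam : Fin n → ℝ) (hlam0 : ∀ j, 0 ≤ lam j)
    (hmoves : ∀ g, InGraver D g → Feas D dv u (xs + g) →
      0 ≤ ∑ j, lam j * (f j ((xs j : ℝ) + (g j : ℝ)) - f j (xs j : ℝ))) :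
    ∀ x : Fin n → ℤ, Feas D dv u x →
      ∑ j, lam j * f j (xs j : ℝ) ≤ ∑ j, lam j * f j (x j : ℝ) := by
  intro x hx
  by_cases hxeq : x = xs
  · subst hxeq; exact le_refl _
  set z : Fin n → ℤ := x - xs with hzdef
  have hz0 : z ≠ 0 := by
    intro hc
    apply hxeq
    funext j
    have := congrFun hc j
    simp only [hzdef, Pi.sub_apply, Pi.zero_apply] at this
    omega
  have hzker : D.mulVec z = 0 := by
    rw [hzdef, Matrix.mulVec_sub, hx.1, hxs.1, sub_self]
  obtain ⟨L, hLsum, hL⟩ := graver_decomp D (∑ j, (z j).natAbs) z le_rfl hz0 hzker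
  -- bounds on each move
  have hbounds : ∀ g ∈ L, ∀ j, (0 ≤ z j → 0 ≤ g j ∧ g j ≤ z j) ∧ (z j ≤ 0 → z j ≤ g j ∧ g j ≤ 0) := by
    intro g hg j
    exact sign_cases_int (g j) (z j) ((hL g hg).2 j).1 ((hL g hg).2 j).2
  have hfeasmove : ∀ g ∈ L, Feas D dv u (xs + g) := by
    intro g hg
    constructor
    · rw [Matrix.mulVec_add, hxs.1, (hL g hg).1.2.1, add_zero]
    · intro j
      have hb := hbounds g hg j
      have h1 := hxs.2 j
      have h2 := hx.2 j
      have hzj : z j = x j - xs j := by simp [hzdef]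
      simp only [Pi.add_apply]
      rcases le_or_gt 0 (z j) with hc | hc
      · have := hb.1 hc; omega
      · have := hb.2 (le_of_lt hc); omega
  -- per-coordinate convexity estimate
  have hcoord : ∀ j, (L.map (fun g => f j ((xs j : ℝ) + (g j : ℝ)) - f j (xs j : ℝ))).sum
      ≤ f j (x j : ℝ) - f j (xs j : ℝ) := by
    intro j
    have hsign : (∀ t ∈ L.map (fun g => ((g j : ℤ) : ℝ)), 0 ≤ t) ∨
        (∀ t ∈ L.map (fun g => ((g j : ℤ) : ℝ)), t ≤ 0) := by
      rcases le_or_gt 0 (z j) with hc | hc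
      · left
        intro t ht
        obtain ⟨g, hg, rfl⟩ := List.mem_map.mp ht
        exact_mod_cast ((hbounds g hg j).1 hc).1
      · right
        intro t ht
        obtain ⟨g, hg, rfl⟩ := List.mem_map.mp ht
        exact_mod_cast ((hbounds g hg j).2 (le_of_lt hc)).2
    have key := convex_superadd_list (f j) (hconv j) (xs j : ℝ)
      (L.map (fun g => ((g j : ℤ) : ℝ))) hsign
    rw [list_apply_sum j L, hLsum] at key
    have hxz : (xs j : ℝ) + ((z j : ℤ) : ℝ) = (x j : ℝ) := by
      have : z j = x j - xs j := by simp [hzdef]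
      rw [this]; push_cast; ring
    rw [hxz] at key
    simpa [List.map_map, Function.comp_def] using key
  -- combine
  have hswap := swap_list_sum lam
    (fun g j => f j ((xs j : ℝ) + (g j : ℝ)) - f j (xs j : ℝ)) L
  have hlist_nonneg : 0 ≤ (L.map (fun g => ∑ j, lam j *
      (f j ((xs j : ℝ) + (g j : ℝ)) - f j (xs j : ℝ)))).sum := by
    apply List.sum_nonneg
    intro t ht
    obtain ⟨g, hg, rfl⟩ := List.mem_map.mp ht
    exact hmoves g (hL g hg).1 (hfeasmove g hg)
  have hmid : ∑ j, lam j * (L.map (fun g =>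
      f j ((xs j : ℝ) + (g j : ℝ)) - f j (xs j : ℝ))).sum
      ≤ ∑ j, lam j * (f j (x j : ℝ) - f j (xs j : ℝ)) := by
    apply Finset.sum_le_sum
    intro j _
    exact mul_le_mul_of_nonneg_left (hcoord j) (hlam0 j)
  have hfinal : 0 ≤ ∑ j, lam j * (f j (x j : ℝ) - f j (xs j : ℝ)) := by
    rw [hswap] at hmid
    linarith
  have : ∑ j, lam j * (f j (x j : ℝ) - f j (xs j : ℝ))
      = ∑ j, lam j * f j (x j : ℝ) - ∑ j, lam j * f j (xs j : ℝ) := by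
    rw [← Finset.sum_sub_distrib]
    apply Finset.sum_congr rfl
    intro j _
    ring
  linarith [hfinal, this.symm.le]

/-- The difference data of a move. -/
noncomputable def Del {n : ℕ} (f : Fin n → ℝ → ℝ) (xs : Fin n → ℤ) (g : Fin n → ℤ) :
    Fin n → ℝ :=
  fun j => f j ((xs j : ℝ) + (g j : ℝ)) - f j (xs j : ℝ)

lemma eps_lemma (a S : ℝ) (h : ∀ ε : ℝ, 0 < ε → -ε * S < a) : 0 ≤ a := by
  by_contra hc
  push_neg at hc
  rcases le_or_gt S 0 with h1 | h1
  · have := h 1 one_pos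
    nlinarith
  · have hpos : 0 < -a / S := div_pos (by linarith) h1
    have := h (-a / S) hpos
    have heq : -(-a / S) * S = a := by
      field_simp
    rw [heq] at this
    exact lt_irrefl a this

lemma gordan_sep {n : ℕ} (hn : 0 < n) (A : Set (Fin n → ℝ))
    (hdisj : Disjoint {y : Fin n → ℝ | ∀ j, y j < 0} (convexHull ℝ (insert 0 A))) :
    ∃ lam : Fin n → ℝ, (∀ j, 0 ≤ lam j) ∧ lam ≠ 0 ∧ ∀ y ∈ A, 0 ≤ ∑ j, y j * lam j := by
  set O : Set (Fin n → ℝ) := {y | ∀ j, y j < 0} with hO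
  have hOopen : IsOpen O := by
    have : O = ⋂ j, {y : Fin n → ℝ | y j < 0} := by
      ext y; simp [hO, Set.mem_iInter]
    rw [this]
    exact isOpen_iInter_of_finite fun j => (isOpen_Iio).preimage (continuous_apply j)
  have hOconvex : Convex ℝ O := by
    have : O = ⋂ j, {y : Fin n → ℝ | y j < 0} := by
      ext y; simp [hO, Set.mem_iInter]
    rw [this]
    exact convex_iInter fun j =>
      convex_halfSpace_lt ⟨fun _ _ => rfl, fun _ _ => rfl⟩ 0
  obtain ⟨φ, c, hOφ, hBφ⟩ := geometric_hahn_banach_open hOconvex hOopen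
    (convex_convexHull ℝ (insert 0 A)) hdisj
  set lam : Fin n → ℝ := fun j => φ (fun k => if j = k then (1 : ℝ) else 0) with hlam
  have hφeq : ∀ y : Fin n → ℝ, φ y = ∑ j, y j * lam j := by
    intro y
    conv_lhs => rw [pi_eq_sum_univ y]
    rw [map_sum]
    apply Finset.sum_congr rfl
    intro j _
    rw [map_smul, smul_eq_mul, hlam]
  have hc0 : c ≤ 0 := by
    have h0B : (0 : Fin n → ℝ) ∈ convexHull ℝ (insert 0 A) :=
      subset_convexHull ℝ _ (Set.mem_insert 0 A)
    have := hBφ 0 h0B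
    rwa [map_zero] at this
  set S : ℝ := ∑ j, lam j with hS
  have hSkey : ∀ ε : ℝ, 0 < ε → -ε * S < c := by
    intro ε hε
    have hmem : (fun _ => -ε : Fin n → ℝ) ∈ O := fun j => by simpa using neg_neg_iff_pos.mpr hε
    have := hOφ _ hmem
    rwa [hφeq, ← Finset.mul_sum, ← hS] at this
    
  have hcge : 0 ≤ c := eps_lemma c S hSkey
  have hceq : c = 0 := le_antisymm hc0 hcge
  have hlam_nonneg : ∀ j, 0 ≤ lam j := by
    intro j
    apply eps_lemma (lam j) S
    intro ε hε
    have hmem : (fun k => if j = k then (-1 : ℝ) - ε else -ε) ∈ O := by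
      intro k
      by_cases h : j = k <;> simp [h] <;> linarith
    have hval := hOφ _ hmem
    rw [hφeq, hceq] at hval
    have hexp : ∑ k, (if j = k then (-1 : ℝ) - ε else -ε) * lam k = -lam j - ε * S := by
      have hterm : ∀ k, (if j = k then (-1 : ℝ) - ε else -ε) * lam k
          = (if j = k then -lam k else 0) + -ε * lam k := by
        intro k
        by_cases h : j = k <;> simp [h] <;> ring
      rw [Finset.sum_congr rfl fun k _ => hterm k, Finset.sum_add_distrib,
        Finset.sum_ite_eq, ← Finset.mul_sum]
      simp [hS]
      ring
    rw [hexp] at hval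
    linarith
  have hSpos : 0 < S := by
    have hmem : (fun _ => (-1 : ℝ) : Fin n → ℝ) ∈ O := fun j => by norm_num
    have hval := hOφ _ hmem
    rw [hφeq, hceq] at hval
    have : ∑ j, (-1 : ℝ) * lam j = -S := by
      simp [hS]
    linarith
  have hlamne : lam ≠ 0 := by
    intro h
    rw [hS, h] at hSpos
    simp at hSpos
  refine ⟨lam, hlam_nonneg, hlamne, ?_⟩
  intro y hy
  have hyB : y ∈ convexHull ℝ (insert 0 A) :=
    subset_convexHull ℝ _ (Set.mem_insert_of_mem _ hy)
  have := hBφ y hyB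
  rw [hφeq, hceq] at this
  exact this

lemma gordan_point {n : ℕ} (A : Set (Fin n → ℝ)) (p : Fin n → ℝ)
    (hp : p ∈ convexHull ℝ (insert 0 A)) :
    ∃ (t : Finset (Fin n → ℝ)) (w : (Fin n → ℝ) → ℝ), ↑t ⊆ A ∧ t.card ≤ n + 1 ∧
      (∀ y ∈ t, 0 ≤ w y) ∧ ∀ j, ∑ y ∈ t, w y * y j = p j := by
  rw [convexHull_eq_union] at hp
  simp only [Set.mem_iUnion, exists_prop] at hp
  obtain ⟨t0, ht0sub, ht0ai, hpt0⟩ := hp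
  have hcard0 : t0.card ≤ n + 1 := by
    have h1 := ht0ai.card_le_finrank_succ
    have h2 : Module.finrank ℝ (vectorSpan ℝ (Set.range ((↑) : t0 → (Fin n → ℝ)))) ≤
        Module.finrank ℝ (Fin n → ℝ) := Submodule.finrank_le _
    have h3 : Module.finrank ℝ (Fin n → ℝ) = n := Module.finrank_fin_fun ℝ
    have h4 : Fintype.card t0 = t0.card := Fintype.card_coe t0
    omega
  rw [Finset.convexHull_eq] at hpt0
  obtain ⟨w, hw0, hw1, hcm⟩ := hpt0
  rw [t0.centerMass_eq_of_sum_1 _ hw1] at hcm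
  set t : Finset (Fin n → ℝ) := t0.erase 0 with ht
  have hsum : ∑ y ∈ t, w y • (id y : Fin n → ℝ) = p := by
    rw [ht, Finset.sum_erase _ (by simp)]
    exact hcm
  refine ⟨t, w, ?_, ?_, ?_, ?_⟩
  · intro y hy
    have hyt0 : y ∈ t0 := Finset.mem_of_mem_erase hy
    have hyne : y ≠ 0 := Finset.ne_of_mem_erase hy
    rcases ht0sub hyt0 with h | h
    · exact absurd h hyne
    · exact h
  · exact le_trans (Finset.card_le_card (Finset.erase_subset _ _)) hcard0
  · exact fun y hy => hw0 y (Finset.mem_of_mem_erase hy)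
  · intro j
    have := congrFun hsum j
    rw [← this, Finset.sum_apply]
    apply Finset.sum_congr rfl
    intro y _
    simp [smul_eq_mul]

lemma certificate_of_point {dd n : ℕ} (hn : 0 < n) (D : Matrix (Fin dd) (Fin n) ℤ)
    (dv : Fin dd → ℤ) (u : Fin n → ℤ) (f : Fin n → ℝ → ℝ) (xs : Fin n → ℤ)
    (p : Fin n → ℝ)
    (hp : p ∈ convexHull ℝ (insert 0
      {y | ∃ g, (InGraver D g ∧ Feas D dv u (xs + g)) ∧ Del f xs g = y}))
    (hpO : ∀ j, p j < 0) :
    ∃ H' : Finset (Fin n → ℤ), H'.card ≤ n + 1 ∧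
      (∀ g ∈ H', InGraver D g ∧ Feas D dv u (xs + g)) ∧
      ∃ v : (Fin n → ℤ) → ℚ, (∀ g ∈ H', 0 ≤ v g) ∧
        ∀ j, ∑ g ∈ H', (v g : ℝ) * Del f xs g j < 0 := by
  classical
  obtain ⟨t, w, htA, htcard, hw0, hwp⟩ := gordan_point _ p hp
  set G : (Fin n → ℝ) → (Fin n → ℤ) := fun y =>
    if h : ∃ g, (InGraver D g ∧ Feas D dv u (xs + g)) ∧ Del f xs g = y then h.choose else 0
    with hG
  have hGspec : ∀ y ∈ t, (InGraver D (G y) ∧ Feas D dv u (xs + G y)) ∧ Del f xs (G y) = y := by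
    intro y hy
    have h : ∃ g, (InGraver D g ∧ Feas D dv u (xs + g)) ∧ Del f xs g = y := htA hy
    rw [hG]
    simp only [dif_pos h]
    exact h.choose_spec
  have hinj : ∀ y₁ ∈ t, ∀ y₂ ∈ t, G y₁ = G y₂ → y₁ = y₂ := by
    intro y₁ h₁ y₂ h₂ heq
    rw [← (hGspec y₁ h₁).2, ← (hGspec y₂ h₂).2, heq]
  set H' : Finset (Fin n → ℤ) := t.image G with hH'
  have hcard : H'.card ≤ n + 1 := by
    rw [hH', Finset.card_image_of_injOn hinj]
    exact htcard
  have hmoves : ∀ g ∈ H', InGraver D g ∧ Feas D dv u (xs + g) := by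
    intro g hg
    obtain ⟨y, hy, rfl⟩ := Finset.mem_image.mp hg
    exact (hGspec y hy).1
  set W : (Fin n → ℤ) → ℝ := fun g => w (Del f xs g) with hW
  have hWsum : ∀ j, ∑ g ∈ H', W g * Del f xs g j = p j := by
    intro j
    rw [hH', Finset.sum_image hinj, ← hwp j]
    apply Finset.sum_congr rfl
    intro y hy
    rw [hW]
    simp only [(hGspec y hy).2]
  have hWnn : ∀ g ∈ H', 0 ≤ W g := by
    intro g hg
    obtain ⟨y, hy, rfl⟩ := Finset.mem_image.mp hg
    rw [hW]
    simp only [(hGspec y hy).2]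
    exact hw0 y hy
  haveI : Nonempty (Fin n) := ⟨⟨0, hn⟩⟩
  set δ : ℝ := Finset.univ.inf' Finset.univ_nonempty (fun j => -p j) with hδ
  have hδpos : 0 < δ := by
    rw [hδ, Finset.lt_inf'_iff]
    intro j _
    linarith [hpO j]
  set Bs : ℝ := ∑ g ∈ H', ∑ k, |Del f xs g k| with hBs
  have hBs0 : 0 ≤ Bs :=
    Finset.sum_nonneg fun g _ => Finset.sum_nonneg fun k _ => abs_nonneg _
  set ε : ℝ := δ / (Bs + 1) with hε
  have hεpos : 0 < ε := div_pos hδpos (by linarith)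
  have hq : ∀ g : Fin n → ℤ, ∃ q : ℚ, W g < (q : ℝ) ∧ (q : ℝ) < W g + ε :=
    fun g => exists_rat_btwn (by linarith)
  choose v hv1 hv2 using hq
  refine ⟨H', hcard, hmoves, v, ?_, ?_⟩
  · intro g hg
    have : (0 : ℝ) ≤ (v g : ℝ) := le_of_lt (lt_of_le_of_lt (hWnn g hg) (hv1 g))
    exact_mod_cast this
  · intro j
    have hsplit : ∑ g ∈ H', (v g : ℝ) * Del f xs g j
        = ∑ g ∈ H', W g * Del f xs g j + ∑ g ∈ H', ((v g : ℝ) - W g) * Del f xs g j := by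
      rw [← Finset.sum_add_distrib]
      apply Finset.sum_congr rfl
      intro g _
      ring
    have hbound : ∑ g ∈ H', ((v g : ℝ) - W g) * Del f xs g j ≤ ε * Bs := by
      calc ∑ g ∈ H', ((v g : ℝ) - W g) * Del f xs g j
          ≤ ∑ g ∈ H', ε * |Del f xs g j| := by
            apply Finset.sum_le_sum
            intro g _
            calc ((v g : ℝ) - W g) * Del f xs g j ≤ |((v g : ℝ) - W g) * Del f xs g j| :=
                  le_abs_self _
              _ = |(v g : ℝ) - W g| * |Del f xs g j| := abs_mul _ _
              _ ≤ ε * |Del f xs g j| := by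
                  refine mul_le_mul_of_nonneg_right ?_ (abs_nonneg _)
                  rw [abs_le]
                  constructor <;> [linarith [hv1 g, hεpos]; linarith [hv2 g]]
        _ = ε * ∑ g ∈ H', |Del f xs g j| := by rw [Finset.mul_sum]
        _ ≤ ε * Bs := by
            refine mul_le_mul_of_nonneg_left ?_ (le_of_lt hεpos)
            rw [hBs]
            apply Finset.sum_le_sum
            intro g _
            exact Finset.single_le_sum (f := fun k => |Del f xs g k|) (fun k _ => abs_nonneg _) (Finset.mem_univ j)
    have hεBs : ε * Bs < δ := by
      have : ε * (Bs + 1) = δ := div_mul_cancel₀ δ (by linarith)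
      nlinarith [hεpos]
    have hδj : δ ≤ -p j := Finset.inf'_le _ (Finset.mem_univ j)
    rw [hsplit, hWsum j]
    linarith

/-- coNP certificate for (IIOP): no admissible weight vector `λ` exists iff there are
at most `n+1` feasible Graver moves and a nonnegative rational combination of them that
is strictly negative in every coordinate of the difference data. -/
theorem inverse_optimization_coNP_certificate
    (dd n : ℕ) (D : Matrix (Fin dd) (Fin n) ℤ) (dv : Fin dd → ℤ) (u : Fin n → ℤ)
    (f : Fin n → ℝ → ℝ) (hconv : ∀ j, ConvexOn ℝ Set.univ (f j))
    (xs : Fin n → ℤ) (hxs : Feas D dv u xs) :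
    (¬ ∃ lam : Fin n → ℝ, (∀ j, 0 ≤ lam j) ∧ lam ≠ 0 ∧
      ∀ x : Fin n → ℤ, Feas D dv u x →
        ∑ j, lam j * f j (xs j : ℝ) ≤ ∑ j, lam j * f j (x j : ℝ)) ↔
    (∃ H' : Finset (Fin n → ℤ), H'.card ≤ n + 1 ∧
      (∀ g ∈ H', InGraver D g ∧ Feas D dv u (xs + g)) ∧
      ∃ v : (Fin n → ℤ) → ℚ, (∀ g ∈ H', 0 ≤ v g) ∧
        ∀ j, ∑ g ∈ H', (v g : ℝ) * (f j ((xs j : ℝ) + (g j : ℝ)) - f j (xs j : ℝ)) < 0) := by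
  constructor
  · intro hno
    rcases Nat.eq_zero_or_pos n with hn0 | hn
    · subst hn0
      exact ⟨∅, by simp, by simp, 0, by simp, fun j => absurd j.2 (by omega)⟩
    · set A : Set (Fin n → ℝ) :=
        {y | ∃ g, (InGraver D g ∧ Feas D dv u (xs + g)) ∧ Del f xs g = y} with hA
      by_cases hint : ∃ p, p ∈ convexHull ℝ (insert 0 A) ∧ ∀ j, p j < 0
      · obtain ⟨p, hp, hpO⟩ := hint
        obtain ⟨H', h1, h2, v, h3, h4⟩ := certificate_of_point hn D dv u f xs p hp hpO
        exact ⟨H', h1, h2, v, h3, h4⟩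
      · exfalso
        apply hno
        have hdisj : Disjoint {y : Fin n → ℝ | ∀ j, y j < 0} (convexHull ℝ (insert 0 A)) := by
          rw [Set.disjoint_left]
          intro p hpO hpB
          exact hint ⟨p, hpB, hpO⟩
        obtain ⟨lam, hl0, hlne, hlA⟩ := gordan_sep hn A hdisj
        refine ⟨lam, hl0, hlne, ?_⟩
        apply testset_opt D dv u f hconv xs hxs lam hl0
        intro g hg hfeas
        have hmem : Del f xs g ∈ A := ⟨g, ⟨hg, hfeas⟩, rfl⟩
        have h := hlA _ hmem
        calc (0 : ℝ) ≤ ∑ j, Del f xs g j * lam j := h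
          _ = ∑ j, lam j * (f j ((xs j : ℝ) + (g j : ℝ)) - f j (xs j : ℝ)) := by
              apply Finset.sum_congr rfl
              intro j _
              rw [Del, mul_comm]
  · rintro ⟨H', _, hmoves, v, hv0, hvlt⟩ ⟨lam, hl0, hlne, hopt⟩
    obtain ⟨j0, hj0⟩ : ∃ j0, 0 < lam j0 := by
      by_contra hc
      push_neg at hc
      exact hlne (funext fun j => le_antisymm (hc j) (hl0 j))
    have hgnn : ∀ g ∈ H',
        0 ≤ ∑ j, lam j * (f j ((xs j : ℝ) + (g j : ℝ)) - f j (xs j : ℝ)) := by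
      intro g hg
      have hfeas := (hmoves g hg).2
      have hle := hopt (xs + g) hfeas
      have e : ∑ j, lam j * (f j ((xs j : ℝ) + (g j : ℝ)) - f j (xs j : ℝ))
          = ∑ j, lam j * f j (((xs + g) j : ℤ) : ℝ) - ∑ j, lam j * f j (xs j : ℝ) := by
        rw [← Finset.sum_sub_distrib]
        apply Finset.sum_congr rfl
        intro j _
        have hcast : (((xs + g) j : ℤ) : ℝ) = (xs j : ℝ) + (g j : ℝ) := by
          simp only [Pi.add_apply]
          push_cast
          ring
        rw [hcast]
        ring
      rw [e]
      linarith
    have hswap : ∑ j, lam j * (∑ g ∈ H',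
          (v g : ℝ) * (f j ((xs j : ℝ) + (g j : ℝ)) - f j (xs j : ℝ)))
        = ∑ g ∈ H', (v g : ℝ) * ∑ j, lam j *
          (f j ((xs j : ℝ) + (g j : ℝ)) - f j (xs j : ℝ)) := by
      calc ∑ j, lam j * (∑ g ∈ H',
            (v g : ℝ) * (f j ((xs j : ℝ) + (g j : ℝ)) - f j (xs j : ℝ)))
          = ∑ j, ∑ g ∈ H', lam j *
            ((v g : ℝ) * (f j ((xs j : ℝ) + (g j : ℝ)) - f j (xs j : ℝ))) := by
            simp_rw [Finset.mul_sum]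
        _ = ∑ g ∈ H', ∑ j, lam j *
            ((v g : ℝ) * (f j ((xs j : ℝ) + (g j : ℝ)) - f j (xs j : ℝ))) :=
            Finset.sum_comm
        _ = ∑ g ∈ H', (v g : ℝ) * ∑ j, lam j *
            (f j ((xs j : ℝ) + (g j : ℝ)) - f j (xs j : ℝ)) := by
            apply Finset.sum_congr rfl
            intro g _
            rw [Finset.mul_sum]
            apply Finset.sum_congr rfl
            intro j _
            ring
    have hneg : ∑ j, lam j * (∑ g ∈ H',
        (v g : ℝ) * (f j ((xs j : ℝ) + (g j : ℝ)) - f j (xs j : ℝ))) < 0 := by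
      calc ∑ j, lam j * (∑ g ∈ H',
            (v g : ℝ) * (f j ((xs j : ℝ) + (g j : ℝ)) - f j (xs j : ℝ)))
          < ∑ _j : Fin n, (0 : ℝ) := by
            apply Finset.sum_lt_sum
            · intro j _
              exact mul_nonpos_iff.mpr (Or.inl ⟨hl0 j, (hvlt j).le⟩)
            · exact ⟨j0, Finset.mem_univ j0, mul_neg_of_pos_of_neg hj0 (hvlt j0)⟩
        _ = 0 := by simp
    have hpos : 0 ≤ ∑ g ∈ H', (v g : ℝ) * ∑ j, lam j *
        (f j ((xs j : ℝ) + (g j : ℝ)) - f j (xs j : ℝ)) := by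
      apply Finset.sum_nonneg
      intro g hg
      apply mul_nonneg _ (hgnn g hg)
      exact_mod_cast hv0 g hg
    rw [hswap] at hneg
    linarith
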